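/- Let (G,σ) be a 2-BMG, (T,σ) its least resolved tree with root ρ, and S_ρ the support leaves of ρ. If W := U(G,σ) \ S_ρ is nonempty, then W is a proper subset of S_v, where v is the unique inner-vertex child of ρ and S_v is its set of support leaves. -/

import Mathlib

/-- A (finite) rooted tree on vertex type `V`, encoded by its ancestor relation:
`anc u v` means that `u` is an ancestor of `v`, i.e. `u` lies on the path from
the root to `v` (in particular the relation is reflexive, `v ⪯_T u ↔ anc u v`). -/
structure RTree (V : Type) where
  anc : V → V → Prop
  refl : ∀ v, anc v v
  antisymm : ∀ u v, anc u v → anc v u → u = v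
  trans : ∀ u v w, anc u v → anc v w → anc u w
  root : V
  root_anc : ∀ v, anc root v
  chain : ∀ u v w, anc u w → anc v w → anc u v ∨ anc v u

namespace RTree

variable {V C : Type}

/-- a leaf: a vertex without proper descendants. -/
def IsLeaf (T : RTree V) (v : V) : Prop := ∀ w, T.anc v w → w = v

/-- `v` is a child of `u`: `v ≺_T u` with no vertex strictly in between. -/
def IsChild (T : RTree V) (v u : V) : Prop :=
  T.anc u v ∧ u ≠ v ∧ ∀ w, T.anc u w → T.anc w v → w = u ∨ w = v

/-- phylogenetic: every inner vertex has at least two children. -/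
def Phylo (T : RTree V) : Prop :=
  ∀ u, ¬ T.IsLeaf u → ∃ v w, v ≠ w ∧ T.IsChild v u ∧ T.IsChild w u

/-- the leaf set `L(T)`. -/
def leaves (T : RTree V) : Set V := {x | T.IsLeaf x}

/-- `y` is a best match of `x` in the leaf-colored tree `(T,σ)`:
both are leaves, `σ x ≠ σ y`, and for every leaf `y'` of the color `σ y` we have
`lca(x,y) ⪯_T lca(x,y')`, i.e. every common ancestor of `x` and `y'` is an
ancestor of `y`.  These are exactly the arcs of the best match graph `G(T,σ)`,
whose vertex set is the leaf set of `T`. -/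
def BestMatch (T : RTree V) (σ : V → C) (x y : V) : Prop :=
  T.IsLeaf x ∧ T.IsLeaf y ∧ σ x ≠ σ y ∧
    ∀ y', T.IsLeaf y' → σ y' = σ y →
      ∀ u, T.anc u x → T.anc u y' → T.anc u y

/-- the subtree `T(v)` of `T` rooted at `v`. -/
def subtree (T : RTree V) (v : V) : RTree {w : V // T.anc v w} where
  anc a b := T.anc a.1 b.1
  refl a := T.refl a.1
  antisymm a b h1 h2 := Subtype.ext (T.antisymm _ _ h1 h2)
  trans a b c h1 h2 := T.trans _ _ _ h1 h2
  root := ⟨v, T.refl v⟩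
  root_anc a := a.2
  chain a b c h1 h2 := T.chain _ _ _ h1 h2

/-- contraction of the tree edge between the non-root vertex `v` and its
parent: the vertex `v` is identified with its parent, i.e. deleted. -/
def contract (T : RTree V) (v : V) (hv : v ≠ T.root) : RTree {w : V // w ≠ v} where
  anc a b := T.anc a.1 b.1
  refl a := T.refl a.1
  antisymm a b h1 h2 := Subtype.ext (T.antisymm _ _ h1 h2)
  trans a b c h1 h2 := T.trans _ _ _ h1 h2
  root := ⟨T.root, Ne.symm hv⟩
  root_anc a := T.root_anc a.1
  chain a b c h1 h2 := T.chain _ _ _ h1 h2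

/-- The edge of `T` between `v` and its parent is redundant with respect to
`G(T,σ)`: contracting it yields a tree that still explains `G(T,σ)`, i.e. the
contracted tree has the same leaf set and induces the same best-match arcs.
(Edges of a rooted tree are identified with their lower endpoint `v`.) -/
def Redundant (T : RTree V) (σ : V → C) (v : V) : Prop :=
  ∃ hv : v ≠ T.root,
    ¬ T.IsLeaf v ∧
    (∀ w : {w : V // w ≠ v}, T.IsLeaf w.1 ↔ (T.contract v hv).IsLeaf w) ∧
    (∀ x y : {w : V // w ≠ v},
      (T.BestMatch σ x.1 y.1 ↔ (T.contract v hv).BestMatch (fun w => σ w.1) x y))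

/-- `(T,σ)` is the least resolved tree (of the BMG `G(T,σ)`): a phylogenetic
tree none of whose edges is redundant. -/
def LeastResolved (T : RTree V) (σ : V → C) : Prop :=
  T.Phylo ∧ ∀ v, ¬ T.Redundant σ v

/-- the support leaves `S_u = child_T(u) ∩ L(T)` of a vertex `u`. -/
def SupportLeaves (T : RTree V) (u : V) : Set V :=
  {v | T.IsChild v u ∧ T.IsLeaf v}

/-- the set of colors `σ(L(T(v)))` occurring on leaves of the subtree `T(v)`. -/
def subColors (T : RTree V) (σ : V → C) (v : V) : Set C :=
  σ '' {x | T.IsLeaf x ∧ T.anc v x}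

/-- the set of colors `σ(L(T))` of the leaves of `T`. -/
def leafColors (T : RTree V) (σ : V → C) : Set C := σ '' T.leaves

/-- the leaf coloring uses exactly two colors, i.e. `G(T,σ)` is a 2-BMG. -/
def TwoColored (T : RTree V) (σ : V → C) : Prop :=
  ∃ c₁ c₂ : C, c₁ ≠ c₂ ∧ T.leafColors σ = {c₁, c₂}

end RTree

/-- the digraph with arc relation `A`, restricted to the vertex set `S`, is
connected: between any two vertices of `S` there is a path inside `S` in the
underlying undirected graph. -/
def ConnectedOn {β : Type} (A : β → β → Prop) (S : Set β) : Prop :=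
  S.Nonempty ∧ ∀ x ∈ S, ∀ y ∈ S,
    Relation.ReflTransGen (fun a b => a ∈ S ∧ b ∈ S ∧ (A a b ∨ A b a)) x y

/-- `K` is a connected component of the digraph induced by the arc relation `A`
on the vertex set `S`: a maximal connected subset of `S`. -/
def IsComponent {β : Type} (A : β → β → Prop) (S : Set β) (K : Set β) : Prop :=
  K ⊆ S ∧ ConnectedOn A K ∧
    ∀ K', K ⊆ K' → K' ⊆ S → ConnectedOn A K' → K' = K

namespace RTree

/-- the best match graph `G(T,σ)` (on the leaf set of `T`) is connected. -/
def BMGConnected {V C : Type} (T : RTree V) (σ : V → C) : Prop :=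
  ConnectedOn (T.BestMatch σ) T.leaves

/-- the umbrella vertices `U(G,σ)` of the BMG `G(T,σ)`: leaves having an
out-arc to every differently colored leaf. -/
def Umbrella {V C : Type} (T : RTree V) (σ : V → C) : Set V :=
  {x | T.IsLeaf x ∧ ∀ y, T.IsLeaf y → σ y ≠ σ x → T.BestMatch σ x y}

/-- `S` is closed under in-neighbours in `G(T,σ)`: `x ∈ S → N⁻(x) ⊆ S`. -/
def InClosed {V C : Type} (T : RTree V) (σ : V → C) (S : Set V) : Prop :=
  ∀ x ∈ S, ∀ y, T.BestMatch σ y x → y ∈ S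

/-- `S` is a support set of `G(T,σ)`: a maximal subset of the umbrella
vertices that is closed under in-neighbours. -/
def IsSupportSet {V C : Type} (T : RTree V) (σ : V → C) (S : Set V) : Prop :=
  S ⊆ T.Umbrella σ ∧ T.InClosed σ S ∧
    ∀ S', S ⊆ S' → S' ⊆ T.Umbrella σ → T.InClosed σ S' → S' = S

end RTree

section Auxiliary

namespace RTree

variable {V C : Type}

/-- the partial order on vertices where `a ≤ b` iff `b` is an ancestor of `a`. -/
private def ancPO (T : RTree V) : PartialOrder V where
  le a b := T.anc b a
  le_refl a := T.refl a
  le_trans a b c h1 h2 := T.trans c b a h2 h1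
  le_antisymm a b h1 h2 := T.antisymm a b h2 h1

lemma exists_leaf_below [Fintype V] (T : RTree V) (v : V) :
    ∃ l, T.IsLeaf l ∧ T.anc v l := by
  letI := ancPO T
  have hfin : {w | T.anc v w}.Finite := Set.toFinite _
  obtain ⟨m, hm, hmin⟩ : ∃ m ∈ hfin.toFinset, ∀ y ∈ hfin.toFinset, ¬ y < m := by
    obtain ⟨m, hm⟩ := Finset.exists_minimal (s := hfin.toFinset)
      ⟨v, hfin.mem_toFinset.2 (T.refl v)⟩
    exact ⟨m, hm.1, fun y hy hlt =>
      (lt_iff_le_not_ge.1 hlt).2 (hm.2 hy (lt_iff_le_not_ge.1 hlt).1)⟩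
  rw [hfin.mem_toFinset] at hm
  refine ⟨m, ?_, hm⟩
  intro w hw
  have hw' : w ∈ hfin.toFinset := hfin.mem_toFinset.2 (T.trans _ _ _ hm hw)
  have hh := hmin w hw'
  rw [lt_iff_le_not_ge] at hh
  push_neg at hh
  exact T.antisymm w m (hh hw) hw

lemma exists_child_above [Fintype V] (T : RTree V) {r x : V} (h : T.anc r x)
    (hne : x ≠ r) : ∃ c, T.IsChild c r ∧ T.anc c x := by
  letI := ancPO T
  have hfin : {w | T.anc r w ∧ T.anc w x ∧ w ≠ r}.Finite := Set.toFinite _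
  obtain ⟨m, hm, hmax⟩ : ∃ m ∈ hfin.toFinset, ∀ y ∈ hfin.toFinset, ¬ m < y := by
    obtain ⟨m, hm⟩ := Finset.exists_maximal (s := hfin.toFinset)
      ⟨x, hfin.mem_toFinset.2 ⟨h, T.refl x, hne⟩⟩
    exact ⟨m, hm.1, fun y hy hlt =>
      (lt_iff_le_not_ge.1 hlt).2 (hm.2 hy (lt_iff_le_not_ge.1 hlt).1)⟩
  rw [hfin.mem_toFinset] at hm
  obtain ⟨hrm, hmx, hmr⟩ := hm
  refine ⟨m, ⟨hrm, Ne.symm hmr, ?_⟩, hmx⟩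
  intro w hrw hwm
  by_cases hwr : w = r
  · exact Or.inl hwr
  · right
    have hw' : w ∈ hfin.toFinset :=
      hfin.mem_toFinset.2 ⟨hrw, T.trans _ _ _ hwm hmx, hwr⟩
    have hh := hmax w hw'
    rw [lt_iff_le_not_ge] at hh
    push_neg at hh
    exact T.antisymm w m hwm (hh hwm)

lemma child_eq_child (T : RTree V) {p a b w : V} (ha : T.IsChild a p)
    (hb : T.IsChild b p) (haw : T.anc a w) (hbw : T.anc b w) : a = b := by
  rcases T.chain a b w haw hbw with h | h
  · rcases hb.2.2 a ha.1 h with h' | h'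
    · exact absurd h'.symm ha.2.1
    · exact h'
  · rcases ha.2.2 b hb.1 h with h' | h'
    · exact absurd h'.symm hb.2.1
    · exact h'.symm

lemma leaves_contract (T : RTree V) {v : V} (hv : v ≠ T.root) (hvl : ¬ T.IsLeaf v)
    (w : {w : V // w ≠ v}) : T.IsLeaf w.1 ↔ (T.contract v hv).IsLeaf w := by
  constructor
  · intro h w' hw'
    exact Subtype.ext (h w'.1 hw')
  · intro h d hd
    by_cases hdv : d = v
    · exfalso
      subst hdv
      have hvl' : ¬ ∀ e, T.anc d e → e = d := hvl
      push_neg at hvl'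
      obtain ⟨e, he, hed⟩ := hvl'
      have h1 : e = w.1 := congrArg Subtype.val (h ⟨e, hed⟩ (T.trans _ _ _ hd he))
      have h2 : T.anc d w.1 := h1 ▸ he
      exact w.2 (T.antisymm w.1 d hd h2)
    · exact congrArg Subtype.val (h ⟨d, hdv⟩ hd)

lemma redundant_of_key (T : RTree V) (σ : V → C) {v : V} (hv : v ≠ T.root)
    (hvl : ¬ T.IsLeaf v)
    (key : ∀ x y : V, T.IsLeaf x → T.IsLeaf y → σ x ≠ σ y →
      (∀ u, u ≠ v → ∀ y'', T.IsLeaf y'' → σ y'' = σ y →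
        T.anc u x → T.anc u y'' → T.anc u y) →
      ∀ y', T.IsLeaf y' → σ y' = σ y → T.anc v x → T.anc v y' → T.anc v y) :
    T.Redundant σ v := by
  refine ⟨hv, hvl, T.leaves_contract hv hvl, ?_⟩
  intro x y
  constructor
  · rintro ⟨hx, hy, hne, hall⟩
    exact ⟨(T.leaves_contract hv hvl x).1 hx, (T.leaves_contract hv hvl y).1 hy, hne,
      fun y' hy' hc u hux huy' =>
        hall y'.1 ((T.leaves_contract hv hvl y').2 hy') hc u.1 hux huy'⟩
  · rintro ⟨hx, hy, hne, hall⟩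
    have hxl := (T.leaves_contract hv hvl x).2 hx
    have hyl := (T.leaves_contract hv hvl y).2 hy
    refine ⟨hxl, hyl, hne, ?_⟩
    intro y' hy' hc u hux huy'
    have H : ∀ u, u ≠ v → ∀ y'', T.IsLeaf y'' → σ y'' = σ y.1 →
        T.anc u x.1 → T.anc u y'' → T.anc u y.1 := by
      intro u huv y'' hy'' hc'' hux'' huy''
      have hy''v : y'' ≠ v := fun h => hvl (h ▸ hy'')
      exact hall ⟨y'', hy''v⟩ ((T.leaves_contract hv hvl ⟨y'', hy''v⟩).1 hy'')
        hc'' ⟨u, huv⟩ hux'' huy''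
    by_cases huv : u = v
    · subst huv
      exact key x.1 y.1 hxl hyl hne H y' hy' hc hux huy'
    · have hy'v : y' ≠ v := fun h => hvl (h ▸ hy')
      exact hall ⟨y', hy'v⟩ ((T.leaves_contract hv hvl ⟨y', hy'v⟩).1 hy')
        hc ⟨u, huv⟩ hux huy'

/-- in an LRT, no non-root inner vertex has a monochromatic subtree. -/
lemma not_mono (T : RTree V) (σ : V → C) (hLRT : T.LeastResolved σ) {v : V}
    (hv : v ≠ T.root) (hvl : ¬ T.IsLeaf v) :
    ∃ a b, T.IsLeaf a ∧ T.IsLeaf b ∧ T.anc v a ∧ T.anc v b ∧ σ a ≠ σ b := by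
  by_contra hcon
  push_neg at hcon
  apply hLRT.2 v
  apply T.redundant_of_key σ hv hvl
  intro x y hx hy hne _ y' hy' hc hvx hvy'
  exact absurd (hcon x y' hx hy' hvx hvy') (by rw [hc]; exact hne)

lemma exists_ne_color_below (T : RTree V) (σ : V → C) (hLRT : T.LeastResolved σ)
    {v : V} (hv : v ≠ T.root) (hvl : ¬ T.IsLeaf v) (c : C) :
    ∃ y, T.IsLeaf y ∧ T.anc v y ∧ σ y ≠ c := by
  obtain ⟨a, b, ha, hb, hva, hvb, hab⟩ := T.not_mono σ hLRT hv hvl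
  by_cases h : σ a = c
  · exact ⟨b, hb, hvb, fun hbc => hab (h.trans hbc.symm)⟩
  · exact ⟨a, ha, hva, h⟩

end RTree

end Auxiliary

/-- Let `(G,σ)` be a 2-BMG, `(T,σ)` its LRT with root `ρ`,
and `S_ρ` the support leaves of `ρ`.  If `W = U(G,σ) \ S_ρ ≠ ∅`, then `W` is a
proper subset of `S_v`, where `v` is the unique inner-vertex child of `ρ`. -/
theorem W_proper_subset_of_Sv {V C : Type} [Fintype V]
    (T : RTree V) (σ : V → C) (hLRT : T.LeastResolved σ)
    (h2 : T.TwoColored σ)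
    (hW : (T.Umbrella σ \ T.SupportLeaves T.root).Nonempty) :
    ∃ v, (T.IsChild v T.root ∧ ¬ T.IsLeaf v) ∧
      (∀ v', T.IsChild v' T.root → ¬ T.IsLeaf v' → v' = v) ∧
      (T.Umbrella σ \ T.SupportLeaves T.root) ⊂ T.SupportLeaves v := by
  classical
  obtain ⟨x, hxUm, hxS⟩ := hW
  obtain ⟨hxl, hxb⟩ := hxUm
  obtain ⟨c₁, c₂, hcne, hcc⟩ := h2
  have colmem : ∀ l, T.IsLeaf l → σ l = c₁ ∨ σ l = c₂ := by
    intro l hl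
    have hmem : σ l ∈ T.leafColors σ := ⟨l, hl, rfl⟩
    rw [hcc] at hmem
    simpa using hmem
  have tce : ∀ a b z, T.IsLeaf a → T.IsLeaf b → T.IsLeaf z →
      σ a ≠ σ z → σ b ≠ σ z → σ a = σ b := by
    intro a b z ha hb hz h1 h2'
    rcases colmem a ha with h | h <;> rcases colmem b hb with h' | h' <;>
      rcases colmem z hz with h'' | h'' <;>
      first
        | exact h.trans h'.symm
        | exact absurd (h.trans h''.symm) h1
        | exact absurd (h'.trans h''.symm) h2'
  -- the root is not a leaf
  have hrootnl : ¬ T.IsLeaf T.root := by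
    intro hrl
    have hall : ∀ w, w = T.root := fun w => hrl w (T.root_anc w)
    have h1 : c₁ ∈ T.leafColors σ := by rw [hcc]; simp
    have h2' : c₂ ∈ T.leafColors σ := by rw [hcc]; simp
    obtain ⟨l₁, hl₁, e₁⟩ := h1
    obtain ⟨l₂, hl₂, e₂⟩ := h2'
    exact hcne (by rw [← e₁, ← e₂, hall l₁, hall l₂])
  have hxroot : x ≠ T.root := fun h => hrootnl (h ▸ hxl)
  obtain ⟨v, hvchild, hvx⟩ := T.exists_child_above (T.root_anc x) hxroot
  have hxv : x ≠ v := fun h => hxS ⟨h ▸ hvchild, hxl⟩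
  have hvnl : ¬ T.IsLeaf v := fun h => hxv (h x hvx)
  have hvroot : v ≠ T.root := Ne.symm hvchild.2.1
  -- Fact 1: for any umbrella leaf below `v`, all leaves of the other color lie below `v`
  have fact1gen : ∀ x', T.IsLeaf x' →
      (∀ y, T.IsLeaf y → σ y ≠ σ x' → T.BestMatch σ x' y) → T.anc v x' →
      ∀ y, T.IsLeaf y → σ y ≠ σ x' → T.anc v y := by
    intro x' hx'l hx'b hvx' y hy hyc
    obtain ⟨y₀, hy₀l, hvy₀, hy₀c⟩ := T.exists_ne_color_below σ hLRT hvroot hvnl (σ x')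
    exact (hx'b y hy hyc).2.2.2 y₀ hy₀l (tce y₀ y x' hy₀l hy hx'l hy₀c hyc) v hvx' hvy₀
  have fact1 := fact1gen x hxl hxb hvx
  -- Fact 2: `v` is the unique inner-vertex child of the root
  have fact2 : ∀ v', T.IsChild v' T.root → ¬ T.IsLeaf v' → v' = v := by
    intro v' hv'c hv'nl
    obtain ⟨y₀, hy₀l, hv'y₀, hy₀c⟩ :=
      T.exists_ne_color_below σ hLRT (Ne.symm hv'c.2.1) hv'nl (σ x)
    exact T.child_eq_child hv'c hvchild hv'y₀ (fact1 y₀ hy₀l hy₀c)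
  -- Fact 3: every element of `W` has color `σ x` and is a child of `v`
  have fact3 : ∀ x' ∈ T.Umbrella σ \ T.SupportLeaves T.root,
      σ x' = σ x ∧ T.IsChild x' v := by
    intro x' hx'
    obtain ⟨⟨hx'l, hx'b⟩, hx'S⟩ := hx'
    have hx'root : x' ≠ T.root := fun h => hrootnl (h ▸ hx'l)
    obtain ⟨v', hv'c, hv'x'⟩ := T.exists_child_above (T.root_anc x') hx'root
    have hx'v' : x' ≠ v' := fun h => hx'S ⟨h ▸ hv'c, hx'l⟩
    have hv'nl : ¬ T.IsLeaf v' := fun h => hx'v' (h x' hv'x')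
    have hv'v : v' = v := fact2 v' hv'c hv'nl
    rw [hv'v] at hv'x'
    have fact1' := fact1gen x' hx'l hx'b hv'x'
    have hcol : σ x' = σ x := by
      by_contra hne
      have hallv : ∀ y, T.IsLeaf y → T.anc v y := by
        intro y hy
        by_cases h : σ y = σ x'
        · exact fact1 y hy (fun hh => hne (h.symm.trans hh))
        · exact fact1' y hy h
      obtain ⟨d₁, d₂, hd12, hd₁, hd₂⟩ := hLRT.1 T.root hrootnl
      have hwne : ∃ w, T.IsChild w T.root ∧ w ≠ v := by
        by_cases h : d₁ = v
        · exact ⟨d₂, hd₂, fun hh => hd12 (h ▸ hh ▸ rfl)⟩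
        · exact ⟨d₁, hd₁, h⟩
      obtain ⟨w, hwc, hwv⟩ := hwne
      obtain ⟨l, hll, hwl⟩ := T.exists_leaf_below w
      exact hwv (T.child_eq_child hwc hvchild hwl (hallv l hll))
    refine ⟨hcol, ?_⟩
    have hx'v : x' ≠ v := fun h => hvnl (h ▸ hx'l)
    obtain ⟨z, hzc, hzx'⟩ := T.exists_child_above hv'x' hx'v
    by_cases hzx : z = x'
    · exact hzx ▸ hzc
    · exfalso
      have hznl : ¬ T.IsLeaf z := fun h => hzx (h x' hzx').symm
      have hzroot : z ≠ T.root := fun h =>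
        hvroot (T.antisymm v T.root (h ▸ hzc.1) (T.root_anc v))
      obtain ⟨y₀, hy₀l, hzy₀, hy₀c⟩ := T.exists_ne_color_below σ hLRT hzroot hznl (σ x)
      have allz : ∀ y, T.IsLeaf y → σ y ≠ σ x → T.anc z y := by
        intro y hy hyc
        exact (hx'b y hy (fun hh => hyc (hh.trans hcol))).2.2.2 y₀ hy₀l
          (tce y₀ y x hy₀l hy hxl hy₀c hyc) z hzx' hzy₀
      have hzv : z ≠ v := Ne.symm hzc.2.1
      apply hLRT.2 v
      apply T.redundant_of_key σ hvroot hvnl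
      intro x₁ y₁ hx₁ hy₁ hne₁ H y₁' hy₁' hc₁ hvx₁ hvy₁'
      by_cases hcx₁ : σ x₁ = σ x
      · have hy₁x : σ y₁ ≠ σ x := fun h => hne₁ (hcx₁.trans h.symm)
        exact T.trans v z y₁ hzc.1 (allz y₁ hy₁ hy₁x)
      · have hy₁c : σ y₁ = σ x :=
          tce y₁ x x₁ hy₁ hxl hx₁ (Ne.symm hne₁) (fun h => hcx₁ h.symm)
        have hzx₁ : T.anc z x₁ := allz x₁ hx₁ hcx₁
        exact T.trans v z y₁ hzc.1
          (H z hzv x' hx'l (hcol.trans hy₁c.symm) hzx₁ hzx')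
  -- Fact 4: some support leaf of `v` is not in `W`
  have fact4 : ∃ s, s ∈ T.SupportLeaves v ∧
      s ∉ T.Umbrella σ \ T.SupportLeaves T.root := by
    by_contra hcon
    push_neg at hcon
    apply hLRT.2 v
    apply T.redundant_of_key σ hvroot hvnl
    intro x₁ y₁ hx₁ hy₁ hne₁ H y₁' hy₁' hc₁ hvx₁ hvy₁'
    by_cases hcx₁ : σ x₁ = σ x
    · exact fact1 y₁ hy₁ (fun h => hne₁ (hcx₁.trans h.symm))
    · have hy₁c : σ y₁ = σ x :=
        tce y₁ x x₁ hy₁ hxl hx₁ (Ne.symm hne₁) (fun h => hcx₁ h.symm)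
      have hx₁v : x₁ ≠ v := fun h => hvnl (h ▸ hx₁)
      obtain ⟨z, hzc, hzx₁⟩ := T.exists_child_above hvx₁ hx₁v
      by_cases hzx : z = x₁
      · exact absurd (fact3 x₁ (hcon x₁ ⟨hzx ▸ hzc, hx₁⟩)).1 hcx₁
      · have hznl : ¬ T.IsLeaf z := fun h => hzx (h x₁ hzx₁).symm
        have hzroot : z ≠ T.root := fun h =>
          hvroot (T.antisymm v T.root (h ▸ hzc.1) (T.root_anc v))
        have hzv : z ≠ v := Ne.symm hzc.2.1
        obtain ⟨a, b, ha, hb, hza, hzb, hab⟩ := T.not_mono σ hLRT hzroot hznl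
        have hor : σ a = σ x ∨ σ b = σ x := by
          rcases colmem a ha with h | h <;> rcases colmem b hb with h' | h' <;>
            rcases colmem x hxl with h'' | h'' <;>
            first
              | exact Or.inl (h.trans h''.symm)
              | exact Or.inr (h'.trans h''.symm)
              | exact absurd (h.trans h'.symm) hab
        obtain ⟨y₀, hy₀l, hzy₀, hy₀c⟩ :
            ∃ y₀, T.IsLeaf y₀ ∧ T.anc z y₀ ∧ σ y₀ = σ x := by
          rcases hor with h | h
          · exact ⟨a, ha, hza, h⟩
          · exact ⟨b, hb, hzb, h⟩
        exact T.trans v z y₁ hzc.1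
          (H z hzv y₀ hy₀l (hy₀c.trans hy₁c.symm) hzx₁ hzy₀)
  obtain ⟨s, hsSv, hsW⟩ := fact4
  refine ⟨v, ⟨hvchild, hvnl⟩, fact2, ?_⟩
  rw [Set.ssubset_def]
  constructor
  · intro x' hx'
    exact ⟨(fact3 x' hx').2, hx'.1.1⟩
  · intro h
    exact hsW (h hsSv)
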